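/- Let G be a graph, S ⊆ V(G), q,r ≥ 2 integers, and λ a layering of G. For m ∈ {0,…,r−1} let (G_m,S_m) be the (λ,r,m)-stratification of G. Then there exists m ∈ {0,…,r−1} with χ'_q(G_m, S ∪ S_m) ≥ (1 − 6q/r)·χ'_q(G,S). -/

import Mathlib

open Finset

variable {V : Type*}

/-- The set of colours appearing on edges incident to vertex `v`. -/
def vColors (G : SimpleGraph V) (f : V → V → ℕ) (v : V) : Set ℕ :=
  {c | ∃ u, G.Adj v u ∧ f v u = c}

/-- The set of colours used on edges of `G`. -/
def colorsOf (G : SimpleGraph V) (f : V → V → ℕ) : Set ℕ :=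
  {c | ∃ u v, G.Adj u v ∧ f u v = c}

/-- An edge `q`-colouring: a symmetric assignment of colours to edges such that
every vertex is incident with at most `q` distinct colours. -/
def IsEdgeQColoring (G : SimpleGraph V) (q : ℕ) (f : V → V → ℕ) : Prop :=
  (∀ u v, f u v = f v u) ∧ ∀ v, (vColors G f v).ncard ≤ q

/-- `S`-composability: every vertex of `S` sees at most `q - 1` non-zero colours. -/
def IsComposable (G : SimpleGraph V) (q : ℕ) (S : Set V) (f : V → V → ℕ) : Prop :=
  ∀ v ∈ S, ((vColors G f v) \ {0}).ncard ≤ q - 1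

/-- `χ'_q(G, S)`: maximum number of non-zero colours of an `S`-composable edge
`q`-colouring of `G`. -/
noncomputable def chiq (G : SimpleGraph V) (q : ℕ) (S : Set V) : ℕ :=
  sSup {k | ∃ f, IsEdgeQColoring G q f ∧ IsComposable G q S f ∧
    ((colorsOf G f) \ {0}).ncard = k}

/-- `χ'_q(G)`: maximum number of distinct colours of an edge `q`-colouring of `G`. -/
noncomputable def chimax (G : SimpleGraph V) (q : ℕ) : ℕ :=
  sSup {k | ∃ f, IsEdgeQColoring G q f ∧ (colorsOf G f).ncard = k}

/-- `M` is a matching in `G`: a set of edges, pairwise not sharing a vertex. -/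
def IsMatchingSet (G : SimpleGraph V) (M : Set (Sym2 V)) : Prop :=
  M ⊆ G.edgeSet ∧ ∀ e ∈ M, ∀ e' ∈ M, e ≠ e' → ∀ v, v ∈ e → v ∉ e'

/-- `M` is a maximal matching in `G`. -/
def IsMaximalMatchingSet (G : SimpleGraph V) (M : Set (Sym2 V)) : Prop :=
  IsMatchingSet G M ∧ ∀ e ∈ G.edgeSet, ∃ e' ∈ M, ∃ v, v ∈ e ∧ v ∈ e'

/-- `X` is a vertex cover of `G`. -/
def IsVertexCover (G : SimpleGraph V) (X : Set V) : Prop :=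
  ∀ e ∈ G.edgeSet, ∃ v ∈ X, v ∈ e

/-- A layering of `G`. -/
def IsLayering (G : SimpleGraph V) (lam : V → ℤ) : Prop :=
  ∀ u v, G.Adj u v → |lam u - lam v| ≤ 1

/-- The graph part `G_m` of the `(λ, r, m)`-stratification: delete all edges `uv`
with `λ(u) ≡ m` and `λ(v) ≡ m + 1 (mod r)`. -/
def stratGraph (G : SimpleGraph V) (lam : V → ℤ) (r m : ℤ) : SimpleGraph V where
  Adj u v := G.Adj u v ∧
    ¬ ((lam u ≡ m [ZMOD r] ∧ lam v ≡ m + 1 [ZMOD r]) ∨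
       (lam v ≡ m [ZMOD r] ∧ lam u ≡ m + 1 [ZMOD r]))
  symm := by
    constructor
    intro u v h
    exact ⟨h.1.symm, fun hc => h.2 hc.symm⟩
  loopless := ⟨fun v h => G.loopless.irrefl v h.1⟩

/-- The set `S_m` of the `(λ, r, m)`-stratification: vertices incident with deleted
edges. -/
def stratSet (G : SimpleGraph V) (lam : V → ℤ) (r m : ℤ) : Set V :=
  {v | ∃ u, G.Adj v u ∧ ¬ (stratGraph G lam r m).Adj v u}
/- ============ Auxiliary lemmas for stmt8 ============ -/

lemma vColors_finite [Fintype V] (G : SimpleGraph V) (f : V → V → ℕ) (v : V) :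
    (vColors G f v).Finite := by
  apply Set.Finite.subset (Set.finite_range (f v))
  rintro c ⟨u, -, rfl⟩
  exact ⟨u, rfl⟩

lemma colorsOf_finite [Fintype V] (G : SimpleGraph V) (f : V → V → ℕ) :
    (colorsOf G f).Finite := by
  apply Set.Finite.subset (Set.finite_range (fun p : V × V => f p.1 p.2))
  rintro c ⟨u, v, -, rfl⟩
  exact ⟨(u, v), rfl⟩

lemma chiqSet_bddAbove [Fintype V] (G : SimpleGraph V) (q : ℕ) (S : Set V) :
    BddAbove {k | ∃ f, IsEdgeQColoring G q f ∧ IsComposable G q S f ∧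
      ((colorsOf G f) \ {0}).ncard = k} := by
  refine ⟨Fintype.card (V × V), ?_⟩
  rintro k ⟨f, -, -, rfl⟩
  have h1 : (colorsOf G f \ {0}) ⊆ Set.range (fun p : V × V => f p.1 p.2) := by
    rintro c ⟨⟨u, v, -, rfl⟩, -⟩
    exact ⟨(u, v), rfl⟩
  calc (colorsOf G f \ {0}).ncard ≤ (Set.range (fun p : V × V => f p.1 p.2)).ncard :=
        Set.ncard_le_ncard h1 (Set.finite_range _)
    _ ≤ (Set.univ : Set (V × V)).ncard := by
        rw [← Set.image_univ]; exact Set.ncard_image_le Set.finite_univ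
    _ = Fintype.card (V × V) := by simp [Set.ncard_univ, Nat.card_eq_fintype_card]

lemma le_chiq [Fintype V] (G : SimpleGraph V) (q : ℕ) (S : Set V) (f : V → V → ℕ)
    (h1 : IsEdgeQColoring G q f) (h2 : IsComposable G q S f) :
    ((colorsOf G f) \ {0}).ncard ≤ chiq G q S :=
  le_csSup (chiqSet_bddAbove G q S) ⟨f, h1, h2, rfl⟩

lemma chiq_zero_mem [Fintype V] (G : SimpleGraph V) (q : ℕ) (hq : 2 ≤ q) (S : Set V) :
    (0:ℕ) ∈ {k | ∃ f, IsEdgeQColoring G q f ∧ IsComposable G q S f ∧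
      ((colorsOf G f) \ {0}).ncard = k} := by
  refine ⟨fun _ _ => 0, ⟨fun _ _ => rfl, ?_⟩, ?_, ?_⟩
  · intro v
    have hsub : vColors G (fun _ _ => 0) v ⊆ {0} := by rintro c ⟨u, -, rfl⟩; rfl
    calc (vColors G (fun _ _ => 0) v).ncard ≤ ({0} : Set ℕ).ncard :=
          Set.ncard_le_ncard hsub (Set.finite_singleton 0)
      _ ≤ q := by simp [Set.ncard_singleton]; omega
  · intro v _
    have hsub : vColors G (fun _ _ => 0) v \ {0} = ∅ := by
      ext c
      simp only [Set.mem_diff, Set.mem_singleton_iff, Set.mem_empty_iff_false, iff_false]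
      rintro ⟨⟨u, -, rfl⟩, h⟩
      exact h rfl
    simp [hsub]
  · have hsub : colorsOf G (fun _ _ => 0) \ {0} = ∅ := by
      ext c
      simp only [Set.mem_diff, Set.mem_singleton_iff, Set.mem_empty_iff_false, iff_false]
      rintro ⟨⟨u, v, -, rfl⟩, h⟩
      exact h rfl
    simp [hsub]

/-- A matching represented as a finset of ordered pairs. -/
def PairMatching (G : SimpleGraph V) (M : Finset (V × V)) : Prop :=
  (∀ p ∈ M, G.Adj p.1 p.2) ∧
  ∀ p ∈ M, ∀ p' ∈ M, p ≠ p' →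
    p.1 ≠ p'.1 ∧ p.1 ≠ p'.2 ∧ p.2 ≠ p'.1 ∧ p.2 ≠ p'.2

lemma exists_maximal_pairMatching [Fintype V] (G : SimpleGraph V) :
    ∃ M : Finset (V × V), PairMatching G M ∧
      ∀ u v, G.Adj u v → ∃ p ∈ M, p.1 = u ∨ p.2 = u ∨ p.1 = v ∨ p.2 = v := by
  classical
  have hne : ((Finset.univ : Finset (Finset (V × V))).filter (fun M => PairMatching G M)).Nonempty := by
    refine ⟨∅, ?_⟩
    simp only [Finset.mem_filter, Finset.mem_univ, true_and]
    exact ⟨fun p hp => absurd hp (Finset.notMem_empty p),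
      fun p hp => absurd hp (Finset.notMem_empty p)⟩
  obtain ⟨M, hMmem, hmax⟩ := Finset.exists_max_image _ Finset.card hne
  rw [Finset.mem_filter] at hMmem
  have hMmatch := hMmem.2
  refine ⟨M, hMmatch, ?_⟩
  intro u v huv
  by_contra hcon
  push_neg at hcon
  have hnotmem : (u, v) ∉ M := fun h => (hcon _ h).1 rfl
  have hM' : PairMatching G (insert (u, v) M) := by
    constructor
    · intro p hp
      rcases Finset.mem_insert.1 hp with rfl | hp
      · exact huv
      · exact hMmatch.1 p hp
    · intro p hp p' hp' hne'
      rcases Finset.mem_insert.1 hp with rfl | hp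
      · rcases Finset.mem_insert.1 hp' with h' | hp'
        · exact absurd h'.symm hne'
        · obtain ⟨h1, h2, h3, h4⟩ := hcon p' hp'
          exact ⟨h1.symm, h2.symm, h3.symm, h4.symm⟩
      · rcases Finset.mem_insert.1 hp' with rfl | hp'
        · obtain ⟨h1, h2, h3, h4⟩ := hcon p hp
          exact ⟨h1, h3, h2, h4⟩
        · exact hMmatch.2 p hp p' hp' hne'
  have hle := hmax (insert (u, v) M) (Finset.mem_filter.2 ⟨Finset.mem_univ _, hM'⟩)
  rw [Finset.card_insert_of_notMem hnotmem] at hle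
  omega

lemma pairMatching_card_le_chiq [Fintype V] (G : SimpleGraph V) (q : ℕ) (hq : 2 ≤ q)
    (S : Set V) (M : Finset (V × V)) (hM : PairMatching G M) :
    M.card ≤ chiq G q S := by
  classical
  let e := Fintype.equivFin (V × V)
  set g : V × V → ℕ := fun p => (e p : ℕ) + 1 with hg
  have hginj : Function.Injective g := by
    intro a b hab
    apply e.injective
    apply Fin.val_injective
    simpa [hg] using hab
  have hgpos : ∀ p, g p ≠ 0 := fun p => by simp [hg]
  set fM : V → V → ℕ :=
    fun u v => if (u, v) ∈ M then g (u, v) else if (v, u) ∈ M then g (v, u) else 0 with hfM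
  have hboth : ∀ u v, (u, v) ∈ M → (v, u) ∈ M → False := by
    intro u v h1 h2
    have hadj := hM.1 _ h1
    have hneq : ((u, v) : V × V) ≠ (v, u) := by
      intro h
      exact G.ne_of_adj hadj (congrArg Prod.fst h)
    exact (hM.2 _ h1 _ h2 hneq).2.1 rfl
  have hsymm : ∀ u v, fM u v = fM v u := by
    intro u v
    by_cases h1 : (u, v) ∈ M <;> by_cases h2 : (v, u) ∈ M
    · exact (hboth u v h1 h2).elim
    · simp [hfM, h1, h2]
    · simp [hfM, h1, h2]
    · simp [hfM, h1, h2]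
  have hpair : ∀ x w c, fM x w = c → c ≠ 0 →
      ∃ p ∈ M, (p = (x, w) ∨ p = (w, x)) ∧ c = g p := by
    intro x w c hc hc0
    by_cases h1 : (x, w) ∈ M
    · simp only [hfM, if_pos h1] at hc
      exact ⟨(x, w), h1, Or.inl rfl, hc.symm⟩
    · by_cases h2 : (w, x) ∈ M
      · simp only [hfM, if_neg h1, if_pos h2] at hc
        exact ⟨(w, x), h2, Or.inr rfl, hc.symm⟩
      · simp only [hfM, if_neg h1, if_neg h2] at hc
        exact absurd hc.symm hc0
  have huniq : ∀ (x : V) (p p' : V × V), p ∈ M → p' ∈ M →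
      (p.1 = x ∨ p.2 = x) → (p'.1 = x ∨ p'.2 = x) → p = p' := by
    intro x p p' hp hp' h1 h2
    by_contra hne
    obtain ⟨a, b, c, d⟩ := hM.2 p hp p' hp' hne
    rcases h1 with h1 | h1 <;> rcases h2 with h2 | h2
    · exact a (h1.trans h2.symm)
    · exact b (h1.trans h2.symm)
    · exact c (h1.trans h2.symm)
    · exact d (h1.trans h2.symm)
  have hsub : ∀ x, (vColors G fM x \ {0}).Subsingleton := by
    intro x c1 hc1 c2 hc2
    obtain ⟨⟨w1, hadj1, hw1⟩, h01⟩ := hc1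
    obtain ⟨⟨w2, hadj2, hw2⟩, h02⟩ := hc2
    simp only [Set.mem_singleton_iff] at h01 h02
    obtain ⟨p1, hp1, hx1, hcg1⟩ := hpair x w1 c1 hw1 h01
    obtain ⟨p2, hp2, hx2, hcg2⟩ := hpair x w2 c2 hw2 h02
    have e1 : p1.1 = x ∨ p1.2 = x := by rcases hx1 with rfl | rfl <;> simp
    have e2 : p2.1 = x ∨ p2.2 = x := by rcases hx2 with rfl | rfl <;> simp
    rw [hcg1, hcg2, huniq x p1 p2 hp1 hp2 e1 e2]
  have hsub_le : ∀ x, (vColors G fM x \ {0}).ncard ≤ 1 := by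
    intro x
    rcases (hsub x).eq_empty_or_singleton with h | ⟨a, h⟩ <;> simp [h]
  have hq1 : ∀ x, (vColors G fM x).ncard ≤ q := by
    intro x
    have hsubset : vColors G fM x ⊆ insert 0 (vColors G fM x \ {0}) := by
      intro c hc
      by_cases h : c = 0
      · simp [h]
      · exact Set.mem_insert_of_mem _ ⟨hc, h⟩
    have hfin : (vColors G fM x \ {0}).Finite := (vColors_finite G fM x).diff
    calc (vColors G fM x).ncard ≤ (insert 0 (vColors G fM x \ {0})).ncard :=
          Set.ncard_le_ncard hsubset (hfin.insert 0)
      _ ≤ (vColors G fM x \ {0}).ncard + 1 := Set.ncard_insert_le _ _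
      _ ≤ q := by have := hsub_le x; omega
  have hcolors : colorsOf G fM \ {0} = g '' ↑M := by
    ext c
    constructor
    · rintro ⟨⟨u, v, hadj, hc⟩, h0⟩
      simp only [Set.mem_singleton_iff] at h0
      obtain ⟨p, hp, -, rfl⟩ := hpair u v c hc h0
      exact ⟨p, Finset.mem_coe.2 hp, rfl⟩
    · rintro ⟨p, hp, rfl⟩
      have hpM : p ∈ M := Finset.mem_coe.1 hp
      refine ⟨⟨p.1, p.2, hM.1 p hpM, ?_⟩, by simp [hgpos p]⟩
      have : ((p.1, p.2) : V × V) = p := rfl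
      simp only [hfM, this, if_pos hpM]
  have hcard : (colorsOf G fM \ {0}).ncard = M.card := by
    rw [hcolors, Set.ncard_image_of_injective _ hginj, Set.ncard_coe_finset]
  calc M.card = (colorsOf G fM \ {0}).ncard := hcard.symm
    _ ≤ chiq G q S := le_chiq G q S fM ⟨hsymm, hq1⟩
        (fun v _ => le_trans (hsub_le v) (by omega))

lemma residue_filter_card (r : ℤ) (hr : 2 ≤ r) (a : ℤ)
    [DecidablePred (fun m => a ≡ m [ZMOD r] ∨ a ≡ m + 1 [ZMOD r])] :
    (Finset.filter (fun m => a ≡ m [ZMOD r] ∨ a ≡ m + 1 [ZMOD r])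
      (Finset.Ico (0:ℤ) r)).card = 2 := by
  have hr0 : (0:ℤ) < r := by omega
  have key : Finset.filter (fun m => a ≡ m [ZMOD r] ∨ a ≡ m + 1 [ZMOD r])
      (Finset.Ico (0:ℤ) r) = {a % r, (a - 1) % r} := by
    ext m
    simp only [Finset.mem_filter, Finset.mem_Ico, Finset.mem_insert, Finset.mem_singleton]
    constructor
    · rintro ⟨⟨h0, h1⟩, h | h⟩
      · left
        have hm : m % r = m := Int.emod_eq_of_lt h0 h1
        unfold Int.ModEq at h
        omega
      · right
        have h' : a - 1 ≡ m [ZMOD r] := by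
          have h2 := Int.ModEq.sub_right 1 h
          simpa using h2
        have hm : m % r = m := Int.emod_eq_of_lt h0 h1
        unfold Int.ModEq at h'
        omega
    · intro h
      rcases h with rfl | rfl
      · refine ⟨⟨Int.emod_nonneg a (by omega), Int.emod_lt_of_pos a hr0⟩, Or.inl ?_⟩
        show a % r = a % r % r
        rw [Int.emod_emod_of_dvd a dvd_rfl]
      · refine ⟨⟨Int.emod_nonneg _ (by omega), Int.emod_lt_of_pos _ hr0⟩, Or.inr ?_⟩
        have h1 : (a - 1) % r ≡ a - 1 [ZMOD r] := Int.emod_emod_of_dvd (a - 1) dvd_rfl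
        have h2 := h1.add_right 1
        simpa using h2.symm
  rw [key]
  have hne : a % r ≠ (a - 1) % r := by
    intro hEq
    have hmod : a ≡ a - 1 [ZMOD r] := hEq
    have hdvd : r ∣ (a - 1) - a := hmod.dvd
    have : r ∣ (1 : ℤ) := by
      have h1 : (a - 1) - a = -1 := by ring
      rw [h1] at hdvd
      exact (dvd_neg.1 hdvd)
    have := Int.le_of_dvd one_pos this
    omega
  rw [Finset.card_insert_of_notMem (by simpa using hne), Finset.card_singleton]

/-- some stratification loses only a `6q/r` fraction:
`∃ m, χ'_q(G_m, S ∪ S_m) ≥ (1 − 6q/r) χ'_q(G, S)`. -/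
theorem stmt8 [Fintype V] (G : SimpleGraph V) (S : Set V) (q : ℕ) (hq : 2 ≤ q)
    (r : ℤ) (hr : 2 ≤ r) (lam : V → ℤ) (hlam : IsLayering G lam) :
    ∃ m : ℤ, 0 ≤ m ∧ m ≤ r - 1 ∧
      (1 - 6 * (q : ℝ) / (r : ℝ)) * (chiq G q S : ℝ) ≤
        (chiq (stratGraph G lam r m) q (S ∪ stratSet G lam r m) : ℝ) := by
  classical
  set k := chiq G q S with hkdef
  -- optimal colouring f achieving k
  have hne : {k | ∃ f, IsEdgeQColoring G q f ∧ IsComposable G q S f ∧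
      ((colorsOf G f) \ {0}).ncard = k}.Nonempty := ⟨0, chiq_zero_mem G q hq S⟩
  have hmem : k ∈ {k | ∃ f, IsEdgeQColoring G q f ∧ IsComposable G q S f ∧
      ((colorsOf G f) \ {0}).ncard = k} := Nat.sSup_mem hne (chiqSet_bddAbove G q S)
  obtain ⟨f, ⟨hfsymm, hfq⟩, hfC, hfk⟩ := hmem
  -- maximal matching
  obtain ⟨M, hM, hMcov⟩ := exists_maximal_pairMatching G
  have hMk : M.card ≤ k := pairMatching_card_le_chiq G q hq S M hM
  -- vertex set of the matching
  set W : Finset V := M.image Prod.fst ∪ M.image Prod.snd with hW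
  have hWcard : W.card ≤ 2 * M.card := by
    calc W.card ≤ (M.image Prod.fst).card + (M.image Prod.snd).card :=
          Finset.card_union_le _ _
      _ ≤ M.card + M.card := Nat.add_le_add Finset.card_image_le Finset.card_image_le
      _ = 2 * M.card := by ring
  set T : ℤ → Finset V :=
    fun mm => W.filter (fun x => lam x ≡ mm [ZMOD r] ∨ lam x ≡ mm + 1 [ZMOD r]) with hT
  have hsum : ∑ mm ∈ Finset.Ico (0:ℤ) r, (T mm).card = 2 * W.card := by
    calc ∑ mm ∈ Finset.Ico (0:ℤ) r, (T mm).card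
        = ∑ mm ∈ Finset.Ico (0:ℤ) r, ∑ x ∈ W,
            (if lam x ≡ mm [ZMOD r] ∨ lam x ≡ mm + 1 [ZMOD r] then 1 else 0) := by
          refine Finset.sum_congr rfl fun mm _ => ?_
          rw [hT]
          exact Finset.card_filter _ _
      _ = ∑ x ∈ W, ∑ mm ∈ Finset.Ico (0:ℤ) r,
            (if lam x ≡ mm [ZMOD r] ∨ lam x ≡ mm + 1 [ZMOD r] then 1 else 0) :=
          Finset.sum_comm
      _ = ∑ x ∈ W, ((Finset.Ico (0:ℤ) r).filter
            (fun mm => lam x ≡ mm [ZMOD r] ∨ lam x ≡ mm + 1 [ZMOD r])).card := by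
          refine Finset.sum_congr rfl fun x _ => ?_
          exact (Finset.card_filter _ _).symm
      _ = ∑ x ∈ W, 2 :=
          Finset.sum_congr rfl (fun x _ => residue_filter_card r hr (lam x))
      _ = 2 * W.card := by rw [Finset.sum_const, smul_eq_mul, mul_comm]
  have hIcone : (Finset.Ico (0:ℤ) r).Nonempty := ⟨0, by simp; omega⟩
  obtain ⟨m, hmIco, hmin⟩ :=
    Finset.exists_min_image (Finset.Ico (0:ℤ) r) (fun mm => (T mm).card) hIcone
  have hm0 : 0 ≤ m ∧ m < r := Finset.mem_Ico.1 hmIco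
  have hcount : r.toNat * (T m).card ≤ 4 * k := by
    have h1 : (Finset.Ico (0:ℤ) r).card • (T m).card ≤
        ∑ mm ∈ Finset.Ico (0:ℤ) r, (T mm).card :=
      Finset.card_nsmul_le_sum _ _ _ (fun m' hm' => hmin m' hm')
    have h2 : (Finset.Ico (0:ℤ) r).card = r.toNat := by
      rw [Int.card_Ico]; simp
    rw [h2, smul_eq_mul, hsum] at h1
    omega
  -- set of bad colours
  set BF : Finset ℕ := (T m).biUnion (fun x => (vColors_finite G f x).toFinset) with hBF
  have hBFcard : BF.card ≤ q * (T m).card := by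
    calc BF.card ≤ ∑ x ∈ T m, ((vColors_finite G f x).toFinset).card :=
          Finset.card_biUnion_le
      _ ≤ ∑ x ∈ T m, q := Finset.sum_le_sum (fun x _ => by
            rw [← Set.ncard_eq_toFinset_card _ (vColors_finite G f x)]
            exact hfq x)
      _ = q * (T m).card := by rw [Finset.sum_const, smul_eq_mul, mul_comm]
  have hmemBF : ∀ x ∈ T m, ∀ c ∈ vColors G f x, c ∈ BF := by
    intro x hx c hc
    exact Finset.mem_biUnion.2 ⟨x, hx, (vColors_finite G f x).mem_toFinset.2 hc⟩
  -- colours of deleted edges are bad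
  have hcovT : ∀ u v, G.Adj u v →
      ((lam u ≡ m [ZMOD r] ∧ lam v ≡ m + 1 [ZMOD r]) ∨
       (lam v ≡ m [ZMOD r] ∧ lam u ≡ m + 1 [ZMOD r])) →
      f u v ∈ BF := by
    intro u v hadj hcond
    obtain ⟨p, hp, hpx⟩ := hMcov u v hadj
    have hx : ∃ x, (x ∈ W) ∧ (x = u ∨ x = v) := by
      rcases hpx with h | h | h | h
      · exact ⟨p.1, Finset.mem_union_left _ (Finset.mem_image_of_mem _ hp), Or.inl h⟩
      · exact ⟨p.2, Finset.mem_union_right _ (Finset.mem_image_of_mem _ hp), Or.inl h⟩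
      · exact ⟨p.1, Finset.mem_union_left _ (Finset.mem_image_of_mem _ hp), Or.inr h⟩
      · exact ⟨p.2, Finset.mem_union_right _ (Finset.mem_image_of_mem _ hp), Or.inr h⟩
    obtain ⟨x, hxW, hxuv⟩ := hx
    have hxT : x ∈ T m := by
      rw [hT]
      refine Finset.mem_filter.2 ⟨hxW, ?_⟩
      rcases hxuv with rfl | rfl
      · rcases hcond with ⟨h1, -⟩ | ⟨-, h2⟩
        · exact Or.inl h1
        · exact Or.inr h2
      · rcases hcond with ⟨-, h2⟩ | ⟨h1, -⟩
        · exact Or.inr h2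
        · exact Or.inl h1
    rcases hxuv with rfl | rfl
    · exact hmemBF _ hxT _ ⟨v, hadj, rfl⟩
    · exact hmemBF _ hxT _ ⟨u, hadj.symm, hfsymm x u⟩
  set G' := stratGraph G lam r m with hG'
  set f' : V → V → ℕ := fun u v => if f u v ∈ BF then 0 else f u v with hf'
  have hf'symm : ∀ u v, f' u v = f' v u := by
    intro u v
    simp only [hf', hfsymm u v]
  have hAdj : ∀ u v, G'.Adj u v ↔ (G.Adj u v ∧
      ¬ ((lam u ≡ m [ZMOD r] ∧ lam v ≡ m + 1 [ZMOD r]) ∨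
         (lam v ≡ m [ZMOD r] ∧ lam u ≡ m + 1 [ZMOD r]))) := fun u v => Iff.rfl
  -- q-colouring property of f'
  have hq' : ∀ v, (vColors G' f' v).ncard ≤ q := by
    intro v
    by_cases hcase : ∃ u, G'.Adj v u ∧ f v u ∈ BF
    · obtain ⟨u₀, hadj₀, hmem₀⟩ := hcase
      have hc₀ : f v u₀ ∈ vColors G f v := ⟨u₀, hadj₀.1, rfl⟩
      have hsubset : vColors G' f' v ⊆ insert 0 (vColors G f v \ {f v u₀}) := by
        rintro c ⟨u, hadj, rfl⟩
        by_cases h : f v u ∈ BF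
        · simp [hf', h]
        · have he : f' v u = f v u := by simp [hf', h]
          rw [he]
          refine Set.mem_insert_of_mem _ ⟨⟨u, hadj.1, rfl⟩, ?_⟩
          simp only [Set.mem_singleton_iff]
          intro heq
          exact h (heq ▸ hmem₀)
      have hfin : (vColors G f v \ {f v u₀}).Finite := (vColors_finite G f v).diff
      have h1 : (vColors G f v \ {f v u₀}).ncard = (vColors G f v).ncard - 1 :=
        Set.ncard_diff_singleton_of_mem hc₀
      calc (vColors G' f' v).ncard ≤ (insert 0 (vColors G f v \ {f v u₀})).ncard :=
            Set.ncard_le_ncard hsubset (hfin.insert 0)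
        _ ≤ (vColors G f v \ {f v u₀}).ncard + 1 := Set.ncard_insert_le _ _
        _ ≤ q := by
            have h2 : 0 < (vColors G f v).ncard :=
              (Set.ncard_pos (vColors_finite G f v)).2 ⟨_, hc₀⟩
            have := hfq v
            omega
    · push_neg at hcase
      have hsubset : vColors G' f' v ⊆ vColors G f v := by
        rintro c ⟨u, hadj, rfl⟩
        have h := hcase u hadj
        have he : f' v u = f v u := by simp [hf', h]
        rw [he]
        exact ⟨u, hadj.1, rfl⟩
      exact le_trans (Set.ncard_le_ncard hsubset (vColors_finite G f v)) (hfq v)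
  -- nonzero colours of f' at a vertex avoid BF
  have hsub0 : ∀ v, vColors G' f' v \ {0} ⊆ (vColors G f v \ {0}) \ ↑BF := by
    rintro v c ⟨⟨u, hadj, rfl⟩, h0⟩
    simp only [Set.mem_singleton_iff] at h0
    by_cases h : f v u ∈ BF
    · exact absurd (by simp [hf', h]) h0
    · have he : f' v u = f v u := by simp [hf', h]
      rw [he] at h0 ⊢
      exact ⟨⟨⟨u, hadj.1, rfl⟩, h0⟩, by simpa using h⟩
  -- composability
  have hcomp' : IsComposable G' q (S ∪ stratSet G lam r m) f' := by
    intro v hv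
    have hfinv : ((vColors G f v) \ {0}).Finite := (vColors_finite G f v).diff
    rcases hv with hv | hv
    · have hsubset : vColors G' f' v \ {0} ⊆ vColors G f v \ {0} :=
        fun c hc => (hsub0 v hc).1
      exact le_trans (Set.ncard_le_ncard hsubset hfinv) (hfC v hv)
    · obtain ⟨u, hadj, hnadj⟩ := hv
      have hcond : (lam v ≡ m [ZMOD r] ∧ lam u ≡ m + 1 [ZMOD r]) ∨
          (lam u ≡ m [ZMOD r] ∧ lam v ≡ m + 1 [ZMOD r]) := by
        by_contra hc
        exact hnadj ⟨hadj, hc⟩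
      have hc₀BF : f v u ∈ BF := hcovT v u hadj hcond
      have hc₀ : f v u ∈ vColors G f v := ⟨u, hadj, rfl⟩
      by_cases h0 : f v u = 0
      · have hsubset : vColors G' f' v \ {0} ⊆ vColors G f v \ {0} :=
          fun c hc => (hsub0 v hc).1
        have h1 : (vColors G f v \ {0}).ncard = (vColors G f v).ncard - 1 :=
          Set.ncard_diff_singleton_of_mem (h0 ▸ hc₀)
        have h2 := hfq v
        have h3 := Set.ncard_le_ncard hsubset hfinv
        omega
      · have hc₀' : f v u ∈ vColors G f v \ {0} := ⟨hc₀, h0⟩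
        have hsubset : vColors G' f' v \ {0} ⊆ (vColors G f v \ {0}) \ {f v u} := by
          intro c hc
          obtain ⟨h1, h2⟩ := hsub0 v hc
          refine ⟨h1, ?_⟩
          simp only [Set.mem_singleton_iff]
          intro he
          exact h2 (by simpa [he] using hc₀BF)
        have h1 : ((vColors G f v \ {0}) \ {f v u}).ncard = (vColors G f v \ {0}).ncard - 1 :=
          Set.ncard_diff_singleton_of_mem hc₀'
        have h2 : (vColors G f v \ {0}).ncard ≤ (vColors G f v).ncard :=
          Set.ncard_le_ncard Set.diff_subset (vColors_finite G f v)
        have h3 := Set.ncard_le_ncard hsubset (hfinv.diff)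
        have h4 := hfq v
        omega
  -- surviving colours
  have hsurvive : (colorsOf G f \ {0}) \ ↑BF ⊆ colorsOf G' f' \ {0} := by
    rintro c ⟨⟨⟨u, v, hadj, rfl⟩, h0⟩, hBFc⟩
    have hnotBF : f u v ∉ BF := by simpa using hBFc
    have hnotcond : ¬ ((lam u ≡ m [ZMOD r] ∧ lam v ≡ m + 1 [ZMOD r]) ∨
        (lam v ≡ m [ZMOD r] ∧ lam u ≡ m + 1 [ZMOD r])) := by
      intro hcond
      exact hnotBF (hcovT u v hadj hcond)
    refine ⟨⟨u, v, ⟨hadj, hnotcond⟩, ?_⟩, h0⟩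
    simp [hf', hnotBF]
  have hk' : k ≤ (colorsOf G' f' \ {0}).ncard + BF.card := by
    have hx : (colorsOf G f \ {0}) ⊆ ((colorsOf G f \ {0}) \ ↑BF) ∪ ↑BF := by
      intro c hc
      by_cases h : c ∈ (↑BF : Set ℕ)
      · exact Or.inr h
      · exact Or.inl ⟨hc, h⟩
    have hu1 : (((colorsOf G f \ {0}) \ ↑BF) ∪ (↑BF : Set ℕ)).Finite :=
      (((colorsOf_finite G f).diff).diff).union BF.finite_toSet
    have hstep1 : (colorsOf G f \ {0}).ncard ≤
        (((colorsOf G f \ {0}) \ ↑BF) ∪ (↑BF : Set ℕ)).ncard :=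
      Set.ncard_le_ncard hx hu1
    have hstep2 : (((colorsOf G f \ {0}) \ ↑BF) ∪ (↑BF : Set ℕ)).ncard ≤
        ((colorsOf G f \ {0}) \ ↑BF).ncard + (↑BF : Set ℕ).ncard :=
      Set.ncard_union_le _ _
    have hstep3 : ((colorsOf G f \ {0}) \ ↑BF).ncard ≤ (colorsOf G' f' \ {0}).ncard :=
      Set.ncard_le_ncard hsurvive ((colorsOf_finite G' f').diff)
    have hcoe : (↑BF : Set ℕ).ncard = BF.card := Set.ncard_coe_finset _
    omega
  have hchiq' : (colorsOf G' f' \ {0}).ncard ≤ chiq G' q (S ∪ stratSet G lam r m) :=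
    le_chiq G' q _ f' ⟨hf'symm, hq'⟩ hcomp'
  -- wrap up
  refine ⟨m, hm0.1, by omega, ?_⟩
  have hkch : k ≤ chiq G' q (S ∪ stratSet G lam r m) + q * (T m).card := by
    have := hBFcard
    omega
  set C := chiq G' q (S ∪ stratSet G lam r m) with hC
  have hrR : (0:ℝ) < (r:ℝ) := by exact_mod_cast (by omega : (0:ℤ) < r)
  have h1R : (k:ℝ) ≤ (C:ℝ) + (q:ℝ) * ((T m).card : ℝ) := by exact_mod_cast hkch
  have hrtoNat : ((r.toNat : ℕ) : ℝ) = (r:ℝ) := by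
    exact_mod_cast congrArg (fun z : ℤ => (z : ℝ)) (Int.toNat_of_nonneg (by omega : (0:ℤ) ≤ r))
  have h2R : (r:ℝ) * ((T m).card : ℝ) ≤ 4 * (k:ℝ) := by
    rw [← hrtoNat]
    exact_mod_cast hcount
  have hq0 : (0:ℝ) ≤ (q:ℝ) := Nat.cast_nonneg q
  have hk0 : (0:ℝ) ≤ (k:ℝ) := Nat.cast_nonneg k
  have hdiv : (q:ℝ) * ((T m).card : ℝ) ≤ 6 * (q:ℝ) * (k:ℝ) / (r:ℝ) := by
    rw [le_div_iff₀ hrR]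
    have h3 : (q:ℝ) * ((r:ℝ) * ((T m).card : ℝ)) ≤ (q:ℝ) * (4 * (k:ℝ)) :=
      mul_le_mul_of_nonneg_left h2R hq0
    nlinarith [mul_nonneg hq0 hk0]
  calc (1 - 6 * (q:ℝ) / (r:ℝ)) * (k:ℝ)
      = (k:ℝ) - 6 * (q:ℝ) * (k:ℝ) / (r:ℝ) := by ring
    _ ≤ (k:ℝ) - (q:ℝ) * ((T m).card : ℝ) := by linarith
    _ ≤ (C:ℝ) := by linarith
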